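/- Let $(X_k)_{k \geq 1}$ be i.i.d. nonnegative random variables with $\mathbb{E}[X_1] = 1/\lambda > 0$, and for each $n$, let $(S^{(n)}_l)_{l \geq 1}$ be i.i.d. nonnegative random variables, independent of $(X_k)$, with $\mathbb{E}[S^{(n)}_1] = 1/\mu$ for all $n$ and with atomless distributions. Define $Z_n = \inf_{l \geq 0}\left(\sum_{k=1}^{l} X_k + S^{(n)}_{l+1}\right)$. If $\mathbb{E}[Z_n] \to 0$ as $n \to \infty$, then $\mathbb{E}[(S^{(n)}_1)^2] \to +\infty$. -/

import Mathlib

open MeasureTheory ProbabilityTheory Filter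

lemma aux_min_ineq (s x a : ℝ) (hs : 0 ≤ s) (hx : 0 ≤ x) (ha : 0 < a) :
    min x a * (if s ≤ a then s else 0) ≤ a * min s x := by
  rcases le_or_gt s a with h | h
  · rw [if_pos h]
    rcases le_total s x with hsx | hsx
    · rw [min_eq_left hsx]
      have h1 : min x a ≤ a := min_le_right _ _
      have h0 : (0:ℝ) ≤ min x a := le_min hx ha.le
      nlinarith
    · rw [min_eq_right hsx]
      have h1 : min x a ≤ x := min_le_left _ _
      have h0 : (0:ℝ) ≤ min x a := le_min hx ha.le
      calc min x a * s ≤ x * a := mul_le_mul h1 h hs hx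
        _ = a * x := mul_comm _ _
  · rw [if_neg (not_le.2 h), mul_zero]
    have : (0:ℝ) ≤ min s x := le_min hs hx
    positivity

theorem stmt11 {Ω : Type*} [MeasureSpace Ω] [IsProbabilityMeasure (ℙ : Measure Ω)]
    (X : ℕ → Ω → ℝ) (S : ℕ → ℕ → Ω → ℝ)
    (hX : ∀ k, Measurable (X k)) (hS : ∀ n l, Measurable (S n l))
    (hXnn : ∀ k, ∀ᵐ ω ∂ℙ, 0 ≤ X k ω) (hSnn : ∀ n l, ∀ᵐ ω ∂ℙ, 0 ≤ S n l ω)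
    (hXiid : iIndepFun X ℙ)
    (hXid : ∀ k, IdentDistrib (X k) (X 1) ℙ ℙ)
    (hXint : Integrable (X 1)) (lam : ℝ) (hlam : 0 < lam)
    (hXmean : ∫ ω, X 1 ω ∂ℙ = 1 / lam)
    (hSiid : ∀ n, iIndepFun (S n) ℙ)
    (hSid : ∀ n l, IdentDistrib (S n l) (S n 1) ℙ ℙ)
    (hSXindep : ∀ n l k, IndepFun (S n l) (X k) ℙ)
    (hSint : ∀ n, Integrable (S n 1)) (μ : ℝ) (hμ : 0 < μ)
    (hSmean : ∀ n, ∫ ω, S n 1 ω ∂ℙ = 1 / μ)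
    (hatomless : ∀ n, ∀ x : ℝ, 0 < x → ℙ {ω | S n 1 ω = x} = 0)
    (hZ : Tendsto
      (fun n => ∫ ω, (⨅ l : ℕ, ((∑ k ∈ Finset.Icc 1 l, X k ω) + S n (l + 1) ω)) ∂ℙ)
      atTop (nhds 0)) :
    Tendsto (fun n => ∫⁻ ω, ENNReal.ofReal ((S n 1 ω) ^ 2) ∂ℙ) atTop (nhds ⊤) := by
  rw [ENNReal.tendsto_nhds_top_iff_nnreal]
  intro M
  set m : ℝ := (M : ℝ) with hm_def
  have hm0 : 0 ≤ m := M.coe_nonneg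
  set a : ℝ := 2 * μ * (m + 1) with ha_def
  have ha : 0 < a := by positivity
  set φ : ℝ → ℝ := fun x => min x a with hφ_def
  set ψ : ℝ → ℝ := fun s => if s ≤ a then s else 0 with hψ_def
  have hφm : Measurable φ := measurable_id.min measurable_const
  have hψm : Measurable ψ :=
    Measurable.ite (measurableSet_le measurable_id measurable_const) measurable_id
      measurable_const
  set b : ℝ := ∫ ω, φ (X 1 ω) ∂ℙ with hb_def
  have hgint : Integrable (fun ω => φ (X 1 ω)) := by
    refine Integrable.mono hXint ((hφm.comp (hX 1)).aestronglyMeasurable) ?_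
    filter_upwards [hXnn 1] with ω h0
    simp only [hφ_def, Real.norm_eq_abs]
    rw [abs_of_nonneg (le_min h0 ha.le), abs_of_nonneg h0]
    exact min_le_left _ _
  have hgnn : ∀ᵐ ω ∂ℙ, 0 ≤ φ (X 1 ω) := by
    filter_upwards [hXnn 1] with ω h0 using le_min h0 ha.le
  have hgbd : ∀ᵐ ω ∂ℙ, φ (X 1 ω) ≤ a := Filter.Eventually.of_forall fun ω => min_le_right _ _
  have hb_pos : 0 < b := by
    rcases lt_or_ge 0 b with h | h
    · exact h
    · exfalso
      have hb0 : b = 0 := le_antisymm h (integral_nonneg_of_ae hgnn)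
      have hzero : ∀ᵐ ω ∂ℙ, φ (X 1 ω) = 0 :=
        (integral_eq_zero_iff_of_nonneg_ae hgnn hgint).mp hb0
      have hX0 : ∀ᵐ ω ∂ℙ, X 1 ω = 0 := by
        filter_upwards [hzero, hXnn 1] with ω hz h0
        by_contra hne
        have hx : 0 < X 1 ω := lt_of_le_of_ne h0 (Ne.symm hne)
        have : 0 < min (X 1 ω) a := lt_min hx ha
        simp only [hφ_def] at hz
        linarith
      have h1 : ∫ ω, X 1 ω ∂ℙ = 0 := by
        rw [integral_congr_ae hX0, integral_zero]
      rw [hXmean] at h1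
      have : (0:ℝ) < 1 / lam := by positivity
      linarith
  set ε : ℝ := b / (2 * μ * a) with hε_def
  have hε : 0 < ε := by positivity
  have hev : ∀ᶠ n in atTop,
      (∫ ω, (⨅ l : ℕ, ((∑ k ∈ Finset.Icc 1 l, X k ω) + S n (l + 1) ω)) ∂ℙ) < ε :=
    (tendsto_order.1 hZ).2 ε hε
  filter_upwards [hev] with n hn
  by_contra hcon
  push_neg at hcon
  set f : Ω → ℝ := S n 1 with hf_def
  have hfm : Measurable f := hS n 1
  have hfint : Integrable f := hSint n
  have hfnn : ∀ᵐ ω ∂ℙ, 0 ≤ f ω := hSnn n 1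
  have hfmean : ∫ ω, f ω ∂ℙ = 1 / μ := hSmean n
  -- Step 1 : f² integrable with integral ≤ m
  have hf2m : Measurable (fun ω => f ω ^ 2) := hfm.pow_const 2
  have hlint : ∫⁻ ω, ENNReal.ofReal (f ω ^ 2) ∂ℙ ≤ ENNReal.ofReal m := by
    refine le_trans hcon ?_
    rw [hm_def, ENNReal.ofReal_coe_nnreal]
  have hf2int : Integrable (fun ω => f ω ^ 2) := by
    refine ⟨hf2m.aestronglyMeasurable, ?_⟩
    rw [hasFiniteIntegral_iff_norm]
    have heq : ∀ ω, ENNReal.ofReal ‖f ω ^ 2‖ = ENNReal.ofReal (f ω ^ 2) := by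
      intro ω; rw [Real.norm_of_nonneg (sq_nonneg _)]
    simp_rw [heq]
    exact lt_of_le_of_lt hlint ENNReal.ofReal_lt_top
  have hf2val : ∫ ω, f ω ^ 2 ∂ℙ ≤ m := by
    rw [integral_eq_lintegral_of_nonneg_ae (Filter.Eventually.of_forall fun ω => sq_nonneg _)
      hf2m.aestronglyMeasurable]
    calc (∫⁻ ω, ENNReal.ofReal (f ω ^ 2) ∂ℙ).toReal
        ≤ (ENNReal.ofReal m).toReal := ENNReal.toReal_mono ENNReal.ofReal_ne_top hlint
      _ = m := ENNReal.toReal_ofReal hm0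
  -- Step 2 : truncation T = ψ ∘ f
  have hTmeas : Measurable (fun ω => ψ (f ω)) := hψm.comp hfm
  have hTint : Integrable (fun ω => ψ (f ω)) := by
    refine Integrable.mono hfint hTmeas.aestronglyMeasurable (Filter.Eventually.of_forall ?_)
    intro ω
    simp only [hψ_def, Real.norm_eq_abs]
    rcases le_or_gt (f ω) a with h | h
    · rw [if_pos h]
    · rw [if_neg (not_le.2 h)]
      simp [abs_nonneg]
  have hUint : Integrable (fun ω => f ω - ψ (f ω)) := hfint.sub hTint
  have hUle : ∫ ω, (f ω - ψ (f ω)) ∂ℙ ≤ m / a := by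
    have hUpt : ∀ᵐ ω ∂ℙ, f ω - ψ (f ω) ≤ f ω ^ 2 / a := by
      filter_upwards [hfnn] with ω h0
      simp only [hψ_def]
      rcases le_or_gt (f ω) a with h | h
      · rw [if_pos h, sub_self]; positivity
      · rw [if_neg (not_le.2 h), sub_zero, le_div_iff₀ ha]
        nlinarith
    calc ∫ ω, (f ω - ψ (f ω)) ∂ℙ ≤ ∫ ω, f ω ^ 2 / a ∂ℙ :=
          integral_mono_ae hUint (hf2int.div_const a) hUpt
      _ = (∫ ω, f ω ^ 2 ∂ℙ) / a := integral_div a _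
      _ ≤ m / a := by gcongr
  have hTge : 1 / (2 * μ) ≤ ∫ ω, ψ (f ω) ∂ℙ := by
    have hsplit : ∫ ω, ψ (f ω) ∂ℙ = ∫ ω, f ω ∂ℙ - ∫ ω, (f ω - ψ (f ω)) ∂ℙ := by
      rw [integral_sub hfint hTint]; ring
    rw [hsplit, hfmean]
    have hma : m / a ≤ 1 / (2 * μ) := by
      rw [div_le_div_iff₀ ha (by positivity)]
      rw [ha_def]; nlinarith
    have hid : 1 / μ = 2 * (1 / (2 * μ)) := by field_simp
    linarith
  -- Step 3 : independence
  have hindep : IndepFun (ψ ∘ S n 1) (φ ∘ X 1) ℙ := (hSXindep n 1 1).comp hψm hφm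
  have hprod : ∫ ω, (ψ (f ω) * φ (X 1 ω)) ∂ℙ
      = (∫ ω, ψ (f ω) ∂ℙ) * (∫ ω, φ (X 1 ω) ∂ℙ) := by
    have h := hindep.integral_mul_eq_mul_integral hTint.aestronglyMeasurable hgint.aestronglyMeasurable
    simpa [Function.comp, Pi.mul_apply] using h
  have hTgint : Integrable (fun ω => ψ (f ω) * φ (X 1 ω)) := by
    refine Integrable.mono (hTint.const_mul a)
      ((hTmeas.mul (hφm.comp (hX 1))).aestronglyMeasurable) ?_
    filter_upwards [hgnn, hgbd] with ω h1 h2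
    rw [Real.norm_eq_abs, Real.norm_eq_abs, abs_mul, abs_mul, abs_of_nonneg h1,
      abs_of_nonneg ha.le, mul_comm]
    exact mul_le_mul_of_nonneg_right h2 (abs_nonneg _)
  -- Step 4 : min inequality
  have hminm : Measurable (fun ω => min (f ω) (X 1 ω)) := hfm.min (hX 1)
  have hminint : Integrable (fun ω => min (f ω) (X 1 ω)) := by
    refine Integrable.mono hfint hminm.aestronglyMeasurable ?_
    filter_upwards [hfnn, hXnn 1] with ω h1 h2
    rw [Real.norm_eq_abs, Real.norm_eq_abs, abs_of_nonneg (le_min h1 h2), abs_of_nonneg h1]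
    exact min_le_left _ _
  have hkey : ∫ ω, (ψ (f ω) * φ (X 1 ω)) ∂ℙ ≤ a * ∫ ω, min (f ω) (X 1 ω) ∂ℙ := by
    rw [← integral_const_mul]
    refine integral_mono_ae hTgint (hminint.const_mul a) ?_
    filter_upwards [hfnn, hXnn 1] with ω h1 h2
    have h := aux_min_ineq (f ω) (X 1 ω) a h1 h2 ha
    rw [mul_comm]
    exact h
  have hbT : b * (1 / (2 * μ)) ≤ a * ∫ ω, min (f ω) (X 1 ω) ∂ℙ := by
    calc b * (1 / (2 * μ)) = (1 / (2 * μ)) * b := mul_comm _ _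
      _ ≤ (∫ ω, ψ (f ω) ∂ℙ) * b := mul_le_mul_of_nonneg_right hTge hb_pos.le
      _ = ∫ ω, (ψ (f ω) * φ (X 1 ω)) ∂ℙ := by rw [hprod, hb_def]
      _ ≤ a * ∫ ω, min (f ω) (X 1 ω) ∂ℙ := hkey
  have hminge : ε ≤ ∫ ω, min (f ω) (X 1 ω) ∂ℙ := by
    rw [hε_def, div_le_iff₀ (by positivity : (0:ℝ) < 2 * μ * a)]
    have hinv : (2 * μ) * (1 / (2 * μ)) = 1 := by field_simp
    nlinarith [hbT, hμ]
  -- Step 5 : lower bound Z by min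
  set Zf : Ω → ℝ := fun ω => ⨅ l : ℕ, ((∑ k ∈ Finset.Icc 1 l, X k ω) + S n (l + 1) ω)
    with hZf_def
  have hZmeas : Measurable Zf :=
    Measurable.iInf fun l => (Finset.measurable_sum _ fun k _ => hX k).add (hS n (l + 1))
  have hae : ∀ᵐ ω ∂ℙ, (∀ k, 0 ≤ X k ω) ∧ (∀ l, 0 ≤ S n l ω) :=
    (ae_all_iff.2 hXnn).and (ae_all_iff.2 fun l => hSnn n l)
  have hZprop : ∀ᵐ ω ∂ℙ, min (f ω) (X 1 ω) ≤ Zf ω ∧ ‖Zf ω‖ ≤ ‖f ω‖ := by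
    filter_upwards [hae] with ω hω
    obtain ⟨hx, hs⟩ := hω
    have hterm : ∀ l : ℕ, 0 ≤ (∑ k ∈ Finset.Icc 1 l, X k ω) + S n (l + 1) ω := fun l =>
      add_nonneg (Finset.sum_nonneg fun k _ => hx k) (hs (l + 1))
    have hbdd : BddBelow (Set.range fun l : ℕ =>
        (∑ k ∈ Finset.Icc 1 l, X k ω) + S n (l + 1) ω) := by
      refine ⟨0, ?_⟩
      rintro y ⟨l, rfl⟩
      exact hterm l
    have hZnn : 0 ≤ Zf ω := le_ciInf hterm
    have hZle : Zf ω ≤ f ω := by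
      have h := ciInf_le hbdd 0
      simpa using h
    constructor
    · refine le_ciInf fun l => ?_
      cases l with
      | zero => simp [hf_def]
      | succ p =>
          have h1 : X 1 ω ≤ ∑ k ∈ Finset.Icc 1 (p + 1), X k ω :=
            Finset.single_le_sum (fun k _ => hx k) (by simp [Finset.mem_Icc])
          have h2 := min_le_right (f ω) (X 1 ω)
          have h3 := hs (p + 1 + 1)
          linarith
    · rw [Real.norm_eq_abs, Real.norm_eq_abs, abs_of_nonneg hZnn]
      exact le_trans hZle (le_abs_self _)
  have hZint : Integrable Zf :=
    Integrable.mono hfint hZmeas.aestronglyMeasurable (hZprop.mono fun ω h => h.2)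
  have hfinal : ε ≤ ∫ ω, Zf ω ∂ℙ :=
    le_trans hminge (integral_mono_ae hminint hZint (hZprop.mono fun ω h => h.1))
  exact absurd hfinal (not_le.2 hn)
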